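/- arXiv:2406.03860 — 2 statements merged into one kernel-verified Lean document; each statement's English description precedes it below -/
import Mathlib

section
/- Let β be any ordinal and consider the membership structure V_β whose underlying set is the collection of all sets x ∈ ZFSet with rank(x) < β, equipped with the true membership relation ∈, viewed as a structure for the first-order language of set theory with a single binary relation symbol. Then there exists a countable transitive set U ∈ ZFSet with rank(U) < ω₁ (so U ∈ V_{ω₁}) such that the membership structure on U (underlying set the members of U, relation the true membership relation) is elementarily equivalent to V_β: for every sentence φ of the language of set theory, φ holds in the membership structure on U if and only if φ holds in V_β. In particular, if V_β is a model of any set of sentences (such as the axioms of the reduced set theory RST), then so is U. -/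
open FirstOrder Ordinal

/-- The relations of the first-order language of set theory:
a single binary relation symbol for membership. -/
inductive setTheoryRel : ℕ → Type
  | mem : setTheoryRel 2

/-- The first-order language of set theory: no function symbols and one binary relation symbol. -/
def setTheoryLang : FirstOrder.Language :=
  ⟨fun _ => Empty, setTheoryRel⟩

/-- The membership structure on a subcollection `S` of `ZFSet`: the underlying type is `S` and
the binary relation symbol is interpreted as true set membership. -/
def memStructure (S : Set ZFSet) : setTheoryLang.Structure S where
  funMap := fun f _ => f.elim
  RelMap := fun r x =>
    match r with
    | .mem => (x 0 : ZFSet) ∈ (x 1 : ZFSet)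

/-- Satisfaction of a sentence of the language of set theory in the membership structure on a
subcollection `S` of `ZFSet`. -/
def memSat (S : Set ZFSet) (φ : setTheoryLang.Sentence) : Prop :=
  @FirstOrder.Language.Sentence.Realize setTheoryLang S (memStructure S) φ

universe u v

namespace VbetaAux

open ZFSet FirstOrder.Language

/-! ### Language facts -/

instance (n : ℕ) : Subsingleton (setTheoryRel n) :=
  ⟨fun a b => by cases a; cases b; rfl⟩

instance (n : ℕ) : Countable (setTheoryLang.Functions n) :=
  show Countable Empty from inferInstance

instance (n : ℕ) : Countable (setTheoryLang.Relations n) :=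
  show Countable (setTheoryRel n) from inferInstance

lemma card_le : setTheoryLang.card ≤ Cardinal.aleph0 := by
  have : Countable setTheoryLang.Symbols := inferInstance
  exact Cardinal.mk_le_aleph0

/-- Transfer of sentence satisfaction along a membership-preserving bijection. -/
lemma memSat_congr {A : Set ZFSet.{u}} {B : Set ZFSet.{v}} (e : A ≃ B)
    (he : ∀ x y : A, ((x : ZFSet) ∈ (y : ZFSet) ↔ (e x : ZFSet) ∈ (e y : ZFSet)))
    (φ : setTheoryLang.Sentence) : memSat A φ ↔ memSat B φ := by
  letI := memStructure A
  letI := memStructure B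
  let g : @Language.Equiv setTheoryLang A B _ _ :=
    { e with
      map_fun' := fun f _ => f.elim
      map_rel' := by rintro n ⟨⟩ x; exact (he (x 0) (x 1)).symm }
  exact StrongHomClass.realize_sentence g φ

/-! ### Small sets of ZFC sets are ZFC sets -/

/-- Turn a small collection of ZFC sets into a ZFC set. -/
noncomputable def ofSet (s : Set ZFSet.{u}) [inst : Small.{u} s] : ZFSet.{u} :=
  ZFSet.range (Subtype.val : s → ZFSet.{u})

theorem _root_.ZFSet.mem_toSet (a x : ZFSet.{u}) : a ∈ x.toSet ↔ a ∈ x := Iff.rfl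

theorem _root_.ZFSet.toSet_injective : Function.Injective (ZFSet.toSet.{u}) :=
  SetLike.coe_injective

theorem _root_.ZFSet.toSet_empty : ZFSet.toSet (∅ : ZFSet.{u}) = ∅ := by
  ext z; simp [ZFSet.mem_toSet]

lemma toSet_ofSet (s : Set ZFSet.{u}) [inst : Small.{u} s] : (ofSet s).toSet = s := by
  ext z; simp [ofSet, ZFSet.mem_toSet]

lemma mem_ofSet {s : Set ZFSet.{u}} [Small.{u} s] {z : ZFSet.{u}} :
    z ∈ ofSet s ↔ z ∈ s := by
  rw [← ZFSet.mem_toSet, toSet_ofSet]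

/-! ### Mostowski collapse -/

variable {S : Set ZFSet.{u}}

/-- The Mostowski collapse of the membership relation on `S`, landing in an arbitrary
universe `v`. -/
noncomputable def collapseF [Small.{v} (↥S)] : ↥S → ZFSet.{v} :=
  (InvImage.wf (fun a : ↥S => (a : ZFSet)) ZFSet.mem_wf).fix fun a IH =>
    ofSet (Set.range fun b : {b : ↥S // (b : ZFSet) ∈ (a : ZFSet)} => IH b.1 b.2)

lemma collapseF_def [Small.{v} (↥S)] (a : ↥S) :
    collapseF.{u, v} a =
      ofSet (Set.range fun b : {b : ↥S // (b : ZFSet) ∈ (a : ZFSet)} =>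
        collapseF.{u, v} b.1) :=
  WellFounded.fix_eq _ _ _

lemma mem_collapseF [Small.{v} (↥S)] {a : ↥S} {z : ZFSet.{v}} :
    z ∈ collapseF.{u, v} a ↔
      ∃ b : ↥S, (b : ZFSet) ∈ (a : ZFSet) ∧ collapseF.{u, v} b = z := by
  rw [collapseF_def, mem_ofSet]
  constructor
  · rintro ⟨⟨b, hb⟩, rfl⟩
    exact ⟨b, hb, rfl⟩
  · rintro ⟨b, hb, rfl⟩
    exact ⟨⟨b, hb⟩, rfl⟩

lemma collapseF_inj [Small.{v} (↥S)]
    (hext : ∀ x ∈ S, ∀ y ∈ S, (∀ z ∈ S, (z ∈ x ↔ z ∈ y)) → x = y) :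
    ∀ a b : ↥S, collapseF.{u, v} a = collapseF.{u, v} b → a = b := by
  intro a
  induction a using (InvImage.wf (fun a : ↥S => (a : ZFSet)) ZFSet.mem_wf).induction with
  | _ a IH =>
    intro b hab
    refine Subtype.ext (hext a a.2 b b.2 fun z hzS => ?_)
    constructor
    · intro hza
      have : collapseF.{u, v} (⟨z, hzS⟩ : ↥S) ∈ collapseF.{u, v} b := by
        rw [← hab]
        exact mem_collapseF.2 ⟨⟨z, hzS⟩, hza, rfl⟩
      obtain ⟨w, hwb, hw⟩ := mem_collapseF.1 this
      have := IH ⟨z, hzS⟩ hza w hw.symm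
      rw [show z = (w : ZFSet) from congrArg Subtype.val this]
      exact hwb
    · intro hzb
      have : collapseF.{u, v} (⟨z, hzS⟩ : ↥S) ∈ collapseF.{u, v} a := by
        rw [hab]
        exact mem_collapseF.2 ⟨⟨z, hzS⟩, hzb, rfl⟩
      obtain ⟨w, hwa, hw⟩ := mem_collapseF.1 this
      have := IH w hwa ⟨z, hzS⟩ hw
      rw [show z = (w : ZFSet) from (congrArg Subtype.val this).symm]
      exact hwa

/-! ### Countable transitive sets have countable rank -/

lemma isLimit_omega1 : Order.IsSuccLimit (ω₁ : Ordinal.{u}) :=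
  Cardinal.isSuccLimit_omega 1

lemma rank_lt_omega1_of_countable {x : ZFSet.{u}} (hx : x.toSet.Countable)
    (h : ∀ y ∈ x, rank y < (ω₁ : Ordinal.{u})) : rank x < (ω₁ : Ordinal.{u}) := by
  rcases x.toSet.eq_empty_or_nonempty with he | hne
  · have : x = ∅ := by
      rw [← ZFSet.toSet_empty] at he
      exact ZFSet.toSet_injective he
    rw [this, ZFSet.rank_empty]
    exact isLimit_omega1.pos
  · obtain ⟨g, hg⟩ := hx.exists_eq_range hne
    have hmem : ∀ n, g n ∈ x := fun n => by
      have : g n ∈ x.toSet := by rw [hg]; exact ⟨n, rfl⟩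
      rwa [ZFSet.mem_toSet] at this
    have hle : rank x ≤ ⨆ n : ℕ, Order.succ (rank (g n)) := by
      rw [ZFSet.rank_le_iff]
      intro y hy
      have hy' : y ∈ x.toSet := (ZFSet.mem_toSet _ _).2 hy
      rw [hg] at hy'
      obtain ⟨n, rfl⟩ := hy'
      exact (Order.lt_succ _).trans_le (Ordinal.le_iSup (fun n : ℕ => Order.succ (rank (g n))) n)
    refine hle.trans_lt ?_
    apply Ordinal.iSup_lt_ord_lift
    · rw [Cardinal.isRegular_aleph_one.cof_omega_eq]
      simpa using Cardinal.aleph0_lt_aleph_one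
    · intro n
      exact isLimit_omega1.succ_lt (h _ (hmem n))

lemma rank_lt_omega1_of_transitive {U : ZFSet.{u}} (ht : U.IsTransitive)
    (hc : U.toSet.Countable) : rank U < (ω₁ : Ordinal.{u}) := by
  have key : ∀ x, x ∈ U → rank x < (ω₁ : Ordinal.{u}) := by
    intro x
    induction x using ZFSet.inductionOn with
    | _ x IH =>
      intro hxU
      apply rank_lt_omega1_of_countable
      · refine hc.mono fun z hz => ?_
        exact (ZFSet.mem_toSet _ _).2 (ht.mem_trans ((ZFSet.mem_toSet _ _).1 hz) hxU)
      · intro y hy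
        exact IH y hy (ht.mem_trans hy hxU)
  exact rank_lt_omega1_of_countable hc key

/-! ### The collapsed structure -/

lemma main_collapse (S : Set ZFSet.{u}) (hc : S.Countable)
    (hext : ∀ x ∈ S, ∀ y ∈ S, (∀ z ∈ S, (z ∈ x ↔ z ∈ y)) → x = y) :
    ∃ U : ZFSet.{v}, U.IsTransitive ∧ U.toSet.Countable ∧ U.rank < (ω₁ : Ordinal.{v}) ∧
      ∀ φ : setTheoryLang.Sentence, memSat U.toSet φ ↔ memSat S φ := by
  haveI : Countable ↥S := hc.to_subtype
  haveI : Small.{v} ↥S := Countable.toSmall _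
  let F : ↥S → ZFSet.{v} := collapseF.{u, v}
  let U : ZFSet.{v} := ofSet (Set.range F)
  have hmemU : ∀ {z : ZFSet.{v}}, z ∈ U ↔ ∃ y : S, F y = z := by
    intro z
    rw [mem_ofSet]
    exact Set.mem_range
  have htrans : U.IsTransitive := by
    intro y hyU z hz
    obtain ⟨w, rfl⟩ := hmemU.1 hyU
    obtain ⟨v', _hvw, rfl⟩ := mem_collapseF.1 hz
    exact hmemU.2 ⟨v', rfl⟩
  have hcountU : U.toSet.Countable := by
    rw [show U.toSet = Set.range F from toSet_ofSet _]
    exact Set.countable_range _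
  refine ⟨U, htrans, hcountU, rank_lt_omega1_of_transitive htrans hcountU, fun φ => ?_⟩
  have hmemf : ∀ y : S, F y ∈ U.toSet := fun y =>
    (ZFSet.mem_toSet _ _).2 (hmemU.2 ⟨y, rfl⟩)
  let f : S → U.toSet := fun y => ⟨F y, hmemf y⟩
  have hbij : Function.Bijective f := by
    constructor
    · intro a b hab
      exact collapseF_inj hext a b (congrArg Subtype.val hab)
    · rintro ⟨z, hz⟩
      obtain ⟨y, hy⟩ := hmemU.1 ((ZFSet.mem_toSet _ _).1 hz)
      exact ⟨y, Subtype.ext hy⟩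
  let e : S ≃ U.toSet := Equiv.ofBijective f hbij
  have he : ∀ x y : S, ((x : ZFSet) ∈ (y : ZFSet) ↔ (e x : ZFSet) ∈ (e y : ZFSet)) := by
    intro x y
    show (x : ZFSet) ∈ (y : ZFSet) ↔ F x ∈ F y
    constructor
    · intro hxy
      exact mem_collapseF.2 ⟨x, hxy, rfl⟩
    · intro hxy
      obtain ⟨w, hwy, hw⟩ := mem_collapseF.1 hxy
      rw [show x = w from (collapseF_inj hext w x hw).symm]
      exact hwy
  exact (memSat_congr e he φ).symm

/-! ### The extensionality formula -/

/-- The formula `∀ z, z ∈ x₀ ↔ z ∈ x₁`. -/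
def extFormula : setTheoryLang.Formula (Fin 2) :=
  FirstOrder.Language.BoundedFormula.all
    ((Language.Relations.boundedFormula₂ (L := setTheoryLang)
        setTheoryRel.mem (&0) (Language.Term.var (Sum.inl 0))).iff
      (Language.Relations.boundedFormula₂ (L := setTheoryLang)
        setTheoryRel.mem (&0) (Language.Term.var (Sum.inl 1))))

lemma realize_extFormula {M : Type*} [setTheoryLang.Structure M] (v : Fin 2 → M) :
    extFormula.Realize v ↔
      ∀ z : M, (Language.Structure.RelMap (L := setTheoryLang)
          setTheoryRel.mem ![z, v 0] ↔
        Language.Structure.RelMap (L := setTheoryLang)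
          setTheoryRel.mem ![z, v 1]) := by
  simp only [extFormula, Formula.Realize, BoundedFormula.realize_all,
    BoundedFormula.realize_iff, BoundedFormula.realize_rel₂, Term.realize_var,
    Sum.elim_inl, Sum.elim_inr]
  constructor
  · intro h z
    have := h z
    erw [BoundedFormula.realize_rel₂, BoundedFormula.realize_rel₂] at this
    simpa [Fin.snoc] using this
  · intro h z
    erw [BoundedFormula.realize_rel₂, BoundedFormula.realize_rel₂]
    simpa [Fin.snoc] using h z

open ZFSet FirstOrder.Language in
lemma main_theorem_aux (β : Ordinal.{u}) :
    ∃ U : ZFSet.{v}, U.IsTransitive ∧ U.toSet.Countable ∧ U.rank < (ω₁ : Ordinal.{v}) ∧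
      ∀ φ : setTheoryLang.Sentence,
        memSat U.toSet φ ↔ memSat {x : ZFSet.{u} | x.rank < β} φ := by
  set V : Set ZFSet := {x : ZFSet | x.rank < β} with hV
  -- V is "supertransitive" enough: extensionality holds with quantifiers restricted to V.
  have hmemV : ∀ {x y : ZFSet}, x ∈ y → y ∈ V → x ∈ V := by
    intro x y hxy hyV
    exact lt_trans (ZFSet.rank_lt_of_mem hxy) hyV
  have hextV : ∀ x ∈ V, ∀ y ∈ V, (∀ z ∈ V, (z ∈ x ↔ z ∈ y)) → x = y := by
    intro x hx y hy h
    apply ZFSet.ext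
    intro z
    constructor
    · intro hz; exact (h z (hmemV hz hx)).1 hz
    · intro hz; exact (h z (hmemV hz hy)).2 hz
  by_cases hcV : V.Countable
  · exact main_collapse V hcV hextV
  · letI : setTheoryLang.Structure V := memStructure V
    have hbig : Cardinal.aleph0 ≤ Cardinal.mk V := by
      by_contra hlt
      push_neg at hlt
      exact hcV ((Cardinal.le_aleph0_iff_set_countable).1 hlt.le)
    haveI : Nonempty V := Cardinal.mk_ne_zero_iff.1
      (fun h => Cardinal.aleph0_ne_zero (le_antisymm (h ▸ hbig) zero_le))
    obtain ⟨S, -, hScard⟩ :=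
      exists_elementarySubstructure_card_eq setTheoryLang (∅ : Set V) Cardinal.aleph0
        le_rfl (by simp) (by
          have h3 : Cardinal.lift.{u+1, 0} setTheoryLang.card ≤
              Cardinal.lift.{u+1, 0} Cardinal.aleph0 := Cardinal.lift_le.2 card_le
          simpa using h3)
        (by simpa using hbig)
    have hScount : Countable S :=
      Cardinal.mk_le_aleph0_iff.1 (Cardinal.lift_le.1 hScard.le)
    -- the underlying set of ZFC sets
    set S' : Set ZFSet := Subtype.val '' (S : Set V) with hS'
    have hcS' : S'.Countable := by
      have : (S : Set V).Countable := by
        rw [← Set.countable_coe_iff]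
        exact hScount
      exact this.image _
    have hextS' : ∀ x ∈ S', ∀ y ∈ S', (∀ z ∈ S', (z ∈ x ↔ z ∈ y)) → x = y := by
      rintro x ⟨a, haS, rfl⟩ y ⟨b, hbS, rfl⟩ h
      have hS : Formula.Realize (M := S) extFormula ![⟨a, haS⟩, ⟨b, hbS⟩] := by
        rw [realize_extFormula]
        intro z
        exact h z.1.1 ⟨z.1, z.2, rfl⟩
      have hVr : Formula.Realize (M := V) extFormula
          (S.subtype ∘ ![⟨a, haS⟩, ⟨b, hbS⟩]) :=
        (S.subtype.map_formula extFormula _).2 hS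
      rw [realize_extFormula] at hVr
      have hVr' : ∀ z : V, ((z : ZFSet) ∈ (a : ZFSet) ↔ (z : ZFSet) ∈ (b : ZFSet)) := by
        intro z
        exact hVr z
      apply hextV a a.2 b b.2
      intro z hz
      exact hVr' ⟨z, hz⟩
    obtain ⟨U, h1, h2, h3, h4⟩ := main_collapse S' hcS' hextS'
    refine ⟨U, h1, h2, h3, fun φ => ?_⟩
    rw [h4 φ]
    -- memSat S' φ ↔ (S ⊨ φ) ↔ (V ⊨ φ)
    letI := memStructure S'
    have hf : Function.Bijective (fun x : S => (⟨x.1.1, ⟨x.1, x.2, rfl⟩⟩ : S')) := by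
      constructor
      · intro x y hxy
        have h0 : ((⟨x.1.1, ⟨x.1, x.2, rfl⟩⟩ : S') : ZFSet) = ((⟨y.1.1, ⟨y.1, y.2, rfl⟩⟩ : S') : ZFSet) :=
          congrArg Subtype.val hxy
        exact Subtype.ext (Subtype.ext h0)
      · rintro ⟨z, a, haS, rfl⟩
        exact ⟨⟨a, haS⟩, rfl⟩
    let g : @Language.Equiv setTheoryLang S S' _ _ :=
      { Equiv.ofBijective _ hf with
        map_fun' := fun f _ => f.elim
        map_rel' := by rintro n ⟨⟩ x; exact Iff.rfl }
    have h5 : memSat S' φ ↔ (S ⊨ φ) := (StrongHomClass.realize_sentence g φ).symm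
    have h6 : (S ⊨ φ) ↔ (V ⊨ φ) := S.realize_sentence φ
    rw [h5, h6]
    rfl

end VbetaAux

/-- For every ordinal `β`, the membership structure `V_β` (on the sets of rank `< β`) has a
countable transitive set `U` with `rank U < ω₁` (so `U ∈ V_{ω₁}`) whose membership structure is
elementarily equivalent to `V_β`. In particular any theory modeled by `V_β` is modeled by `U`. -/
theorem exists_countable_transitive_elementarilyEquivalent_V (β : Ordinal) :
    ∃ U : ZFSet, U.IsTransitive ∧ U.toSet.Countable ∧ U.rank < ω₁ ∧
      ∀ φ : setTheoryLang.Sentence,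
        memSat U.toSet φ ↔ memSat {x : ZFSet | x.rank < β} φ :=
  VbetaAux.main_theorem_aux β
end

section
/- There exists a countable transitive set U ∈ ZFSet with rank(U) < ω₁ (so U ∈ V_{ω₁}) such that the membership structure on U (underlying set the members of U, relation the true membership relation) is elementarily equivalent to the membership structure V_{ω₁} on the collection of all sets x ∈ ZFSet with rank(x) < ω₁: for every sentence φ of the first-order language of set theory with a single binary relation symbol, φ holds in the membership structure on U if and only if φ holds in V_{ω₁}. -/
open FirstOrder Ordinal
open Cardinal

universe u v

theorem ZFSet.mem_toSet_s9 (a x : ZFSet.{u}) : a ∈ x.toSet ↔ a ∈ x := Iff.rfl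

instance (x : ZFSet.{u}) : Small.{u} x.toSet := ZFSet.small_coe x

/-! ### Universe lifting of ZFC sets -/

noncomputable def zLift : ZFSet.{u} → ZFSet.{max u v} :=
  ZFSet.mem_wf.fix fun x IH =>
    ZFSet.range.{max u v, u} fun s : Shrink.{u} x.toSet =>
      IH ((equivShrink x.toSet).symm s).1
        ((ZFSet.mem_toSet_s9 _ _).1 ((equivShrink x.toSet).symm s).2)

theorem mem_zLift {x : ZFSet.{u}} {z : ZFSet.{max u v}} :
    z ∈ zLift.{u, v} x ↔ ∃ y ∈ x, zLift.{u, v} y = z := by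
  conv_lhs => rw [zLift, WellFounded.fix_eq]
  rw [ZFSet.mem_range]
  constructor
  · rintro ⟨s, rfl⟩
    exact ⟨((equivShrink x.toSet).symm s).1,
      (ZFSet.mem_toSet_s9 _ _).1 ((equivShrink x.toSet).symm s).2, rfl⟩
  · rintro ⟨y, hy, rfl⟩
    refine ⟨equivShrink x.toSet ⟨y, (ZFSet.mem_toSet_s9 _ _).2 hy⟩, ?_⟩
    show zLift.{u, v}
        ((equivShrink x.toSet).symm (equivShrink x.toSet ⟨y, (ZFSet.mem_toSet_s9 _ _).2 hy⟩)).1 =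
      zLift.{u, v} y
    rw [Equiv.symm_apply_apply]

theorem zLift_injective : Function.Injective zLift.{u, v} := by
  intro a
  induction a using ZFSet.inductionOn with
  | _ a IH =>
    intro b h
    apply ZFSet.ext
    intro z
    constructor
    · intro hz
      have h1 : zLift.{u, v} z ∈ zLift.{u, v} b := h ▸ mem_zLift.2 ⟨z, hz, rfl⟩
      obtain ⟨w, hw, hww⟩ := mem_zLift.1 h1
      rw [IH z hz hww.symm]
      exact hw
    · intro hz
      have h1 : zLift.{u, v} z ∈ zLift.{u, v} a := h.symm ▸ mem_zLift.2 ⟨z, hz, rfl⟩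
      obtain ⟨w, hw, hww⟩ := mem_zLift.1 h1
      rw [← IH w hw hww]
      exact hw

theorem zLift_mem_zLift {x y : ZFSet.{u}} :
    zLift.{u, v} y ∈ zLift.{u, v} x ↔ y ∈ x := by
  constructor
  · intro h
    obtain ⟨w, hw, hww⟩ := mem_zLift.1 h
    rwa [← zLift_injective hww]
  · exact fun h => mem_zLift.2 ⟨y, h, rfl⟩

/-! ### Mostowski collapse into universe 0 -/

noncomputable def collapse0 (e : ℕ → ZFSet.{u}) : ZFSet.{u} → ZFSet.{0} :=
  ZFSet.mem_wf.fix fun x IH =>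
    ZFSet.range.{0, 0} fun p : {n : ℕ // e n ∈ x} => IH (e p.1) p.2

theorem mem_collapse0 {e : ℕ → ZFSet.{u}} {x : ZFSet.{u}} {w : ZFSet.{0}} :
    w ∈ collapse0 e x ↔ ∃ y ∈ Set.range e, y ∈ x ∧ collapse0 e y = w := by
  conv_lhs => rw [collapse0, WellFounded.fix_eq]
  rw [ZFSet.mem_range]
  constructor
  · rintro ⟨p, rfl⟩
    exact ⟨e p.1, Set.mem_range_self _, p.2, rfl⟩
  · rintro ⟨y, ⟨n, rfl⟩, hy, rfl⟩
    exact ⟨⟨n, hy⟩, rfl⟩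

/-! ### Rank bounds -/

theorem rank_lt_omega1_of_countable {x : ZFSet.{u}} (hc : x.toSet.Countable)
    (h : ∀ y ∈ x, ZFSet.rank y < ω₁) : ZFSet.rank x < ω₁ := by
  rcases ZFSet.eq_empty_or_nonempty x with rfl | hne
  · rw [ZFSet.rank_empty]
    exact omega_pos 1
  · obtain ⟨w, hw⟩ := hne
    obtain ⟨f, hf⟩ := hc.exists_eq_range ⟨w, (ZFSet.mem_toSet_s9 w x).2 hw⟩
    have hle : ZFSet.rank x ≤ Ordinal.lsub.{0,u} fun n => ZFSet.rank (f n) := by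
      rw [ZFSet.rank_le_iff]
      intro y hy
      have hy' : y ∈ Set.range f := by rw [← hf]; exact (ZFSet.mem_toSet_s9 y x).2 hy
      obtain ⟨n, rfl⟩ := hy'
      exact Ordinal.lt_lsub _ n
    refine hle.trans_lt (Ordinal.lsub_lt_ord_lift.{0,u} ?_ ?_)
    · rw [← Cardinal.ord_aleph 1, Cardinal.isRegular_aleph_one.cof_eq]
      rw [mk_nat, lift_aleph0]
      exact Cardinal.aleph0_lt_aleph_one
    · intro n
      have : f n ∈ x := (ZFSet.mem_toSet_s9 _ x).1 (hf ▸ Set.mem_range_self n)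
      exact h _ this

theorem hereditary_rank_lt {U : ZFSet.{u}} (htr : U.IsTransitive) (hc : U.toSet.Countable) :
    ∀ x, x ∈ U → ZFSet.rank x < ω₁ := by
  intro x
  induction x using ZFSet.inductionOn with
  | _ x IH =>
    intro hx
    have hsub : x ⊆ U := htr.subset_of_mem hx
    refine rank_lt_omega1_of_countable (hc.mono fun z hz => ?_) fun y hy => IH y hy (hsub hy)
    exact (ZFSet.mem_toSet_s9 _ _).2 (hsub ((ZFSet.mem_toSet_s9 _ _).1 hz))

/-! ### A countable family in `V_{ω₁}` -/

def sing : ℕ → ZFSet.{u}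
  | 0 => ∅
  | n + 1 => {sing n}

theorem rank_sing (n : ℕ) : (sing.{u} n).rank = n := by
  induction n with
  | zero => simp [sing, ZFSet.rank_empty]
  | succ n ih =>
    rw [sing, ZFSet.rank_singleton, ih, Nat.cast_succ, Ordinal.add_one_eq_succ]

theorem sing_injective : Function.Injective sing.{u} := fun m n h =>
  Nat.cast_injective (R := Ordinal.{u}) (by rw [← rank_sing.{u} m, h, rank_sing])

/-! ### The language of set theory is countable -/

instance : IsEmpty (Σ n, setTheoryLang.Functions n) := ⟨fun p => Empty.elim p.2⟩

instance : Subsingleton (Σ n, setTheoryLang.Relations n) := by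
  constructor
  rintro ⟨n, r⟩ ⟨m, s⟩
  cases r
  cases s
  rfl

theorem setTheoryLang_card_le : setTheoryLang.card ≤ ℵ₀ :=
  Cardinal.mk_le_aleph0

/-! ### Löwenheim–Skolem -/

theorem LS_aux {W : Set ZFSet.{u}} [setTheoryLang.Structure ↥W] [Infinite ↥W] :
    ∃ S : setTheoryLang.ElementarySubstructure ↥W, Countable ↥S ∧ Nonempty ↥S := by
  obtain ⟨S, -, hScard⟩ := setTheoryLang.exists_elementarySubstructure_card_eq (M := ↥W)
    ∅ (ℵ₀ : Cardinal.{u + 1}) le_rfl (by simp) (by simp [setTheoryLang_card_le])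
    (Cardinal.lift_le.2 (Cardinal.aleph0_le_mk ↥W))
  rw [Cardinal.lift_inj] at hScard
  refine ⟨S, Cardinal.mk_le_aleph0_iff.1 hScard.le, ?_⟩
  rw [← Cardinal.mk_ne_zero_iff, hScard]
  exact Cardinal.aleph0_ne_zero

/-! ### The extensionality formula -/

abbrev memRel : setTheoryLang.Relations 2 := setTheoryRel.mem

def extFormula : setTheoryLang.Formula (Fin 2) :=
  ((memRel.boundedFormula₂ (FirstOrder.Language.Term.var (Sum.inr 0))
        (FirstOrder.Language.Term.var (Sum.inl 0))).iff
      (memRel.boundedFormula₂ (FirstOrder.Language.Term.var (Sum.inr 0))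
        (FirstOrder.Language.Term.var (Sum.inl 1)))).all

theorem realize_extFormula {M : Type*} [setTheoryLang.Structure M] (v : Fin 2 → M) :
    extFormula.Realize v ↔
      ∀ c : M,
        (FirstOrder.Language.Structure.RelMap (L := setTheoryLang) memRel ![c, v 0] ↔
          FirstOrder.Language.Structure.RelMap (L := setTheoryLang) memRel ![c, v 1]) := by
  have hsnoc : ∀ c : M, (Fin.snoc (default : Fin 0 → M) c : Fin 1 → M) 0 = c := fun _ => rfl
  rw [extFormula, FirstOrder.Language.Formula.Realize]
  simp only [FirstOrder.Language.BoundedFormula.realize_all,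
    FirstOrder.Language.BoundedFormula.realize_iff,
    FirstOrder.Language.BoundedFormula.realize_rel₂,
    FirstOrder.Language.Term.realize_var, Sum.elim_inl, Sum.elim_inr, hsnoc]

/-- There is a countable transitive set `U` with `rank U < ω₁` (so `U ∈ V_{ω₁}`) whose membership
structure is elementarily equivalent to the membership structure `V_{ω₁}` on the collection of
all sets of rank `< ω₁`. -/
theorem exists_countable_transitive_elementarilyEquivalent_V_omega1 :
    ∃ U : ZFSet, U.IsTransitive ∧ U.toSet.Countable ∧ U.rank < ω₁ ∧
      ∀ φ : setTheoryLang.Sentence,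
        memSat U.toSet φ ↔ memSat {x : ZFSet | x.rank < ω₁} φ := by
  classical
  set V : Set ZFSet := {x : ZFSet | x.rank < ω₁} with hV
  letI : setTheoryLang.Structure V := memStructure V
  have hsingV : ∀ n : ℕ, sing n ∈ V := fun n => by
    show (sing n).rank < ω₁
    rw [rank_sing]
    exact (nat_lt_omega0 n).trans (omega0_lt_omega_one)
  haveI : Infinite V :=
    Infinite.of_injective (fun n : ℕ => (⟨sing n, hsingV n⟩ : V))
      fun m n h => sing_injective (congrArg Subtype.val h)
  obtain ⟨S, hScount, hSne⟩ := LS_aux (W := V)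
  -- the countable set of `ZFSet`s underlying `S`
  have hSsetCount : (Subtype.val '' (S : Set V) : Set ZFSet).Countable :=
    Set.Countable.image (Set.countable_coe_iff.2 hScount) _
  have hSsetNe : (Subtype.val '' (S : Set V)).Nonempty := by
    obtain ⟨s0⟩ := hSne
    exact ⟨s0.1.1, s0.1, s0.2, rfl⟩
  obtain ⟨e, he⟩ := Set.Countable.exists_eq_range hSsetCount hSsetNe
  have hmemV : ∀ y ∈ Set.range e, y ∈ V := by
    rw [← he]
    rintro y ⟨⟨y', hy'⟩, hy'S, rfl⟩
    exact hy'
  have hmemS : ∀ y (h : y ∈ Set.range e), (⟨y, hmemV y h⟩ : V) ∈ S := by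
    intro y h
    rw [← he] at h
    obtain ⟨c, hc, rfl⟩ := h
    exact hc
  have hinS : ∀ c : S, (c : V).1 ∈ Set.range e := by
    intro c
    rw [← he]
    exact ⟨c.1, c.2, rfl⟩
  set g : ZFSet → ZFSet.{0} := collapse0 e with hg
  -- extensionality on the range of `e`
  have hext : ∀ a ∈ Set.range e, ∀ b ∈ Set.range e,
      (∀ c ∈ Set.range e, (c ∈ a ↔ c ∈ b)) → a = b := by
    intro a ha b hb hcc
    have h1 : extFormula.Realize (M := S) ![⟨⟨a, hmemV a ha⟩, hmemS a ha⟩,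
        ⟨⟨b, hmemV b hb⟩, hmemS b hb⟩] := by
      rw [realize_extFormula]
      intro c
      exact hcc c.1.1 (hinS c)
    have h2 := (S.subtype.map_formula extFormula _).2 h1
    rw [realize_extFormula] at h2
    apply ZFSet.ext
    intro z
    constructor
    · intro hz
      have hzV : z ∈ V := (ZFSet.rank_lt_of_mem hz).trans (hmemV a ha)
      exact (h2 ⟨z, hzV⟩).1 hz
    · intro hz
      have hzV : z ∈ V := (ZFSet.rank_lt_of_mem hz).trans (hmemV b hb)
      exact (h2 ⟨z, hzV⟩).2 hz
  -- injectivity of the collapse on the range of `e`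
  have hinj : ∀ a, a ∈ Set.range e → ∀ b ∈ Set.range e, g a = g b → a = b := by
    intro a
    induction a using ZFSet.inductionOn with
    | _ a IH =>
      intro ha b hb hgab
      refine hext a ha b hb fun c hc => ⟨fun hca => ?_, fun hcb => ?_⟩
      · have h1 : g c ∈ g b := by
          rw [← hgab]
          exact mem_collapse0.2 ⟨c, hc, hca, rfl⟩
        obtain ⟨d, hd, hdb, hdc⟩ := mem_collapse0.1 h1
        rw [IH c hca hc d hd hdc.symm]
        exact hdb
      · have h1 : g c ∈ g a := by
          rw [hgab]
          exact mem_collapse0.2 ⟨c, hc, hcb, rfl⟩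
        obtain ⟨d, hd, hda, hdc⟩ := mem_collapse0.1 h1
        rw [← IH d hda hd c hc hdc]
        exact hda
  -- the collapse of `S`
  set U₀ : ZFSet.{0} := ZFSet.range fun n => g (e n) with hU₀
  have hmemU₀ : ∀ z : ZFSet.{0}, z ∈ U₀ ↔ ∃ y ∈ Set.range e, g y = z := by
    intro z
    rw [hU₀, ZFSet.mem_range]
    constructor
    · rintro ⟨n, rfl⟩
      exact ⟨e n, Set.mem_range_self n, rfl⟩
    · rintro ⟨y, ⟨n, rfl⟩, rfl⟩
      exact ⟨n, rfl⟩
  have hU₀trans : U₀.IsTransitive := by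
    intro y hy z hz
    obtain ⟨w, hw, rfl⟩ := (hmemU₀ y).1 hy
    obtain ⟨d, hd, _, rfl⟩ := mem_collapse0.1 hz
    exact (hmemU₀ _).2 ⟨d, hd, rfl⟩
  have hU₀count : U₀.toSet.Countable := by
    have : U₀.toSet ⊆ Set.range fun n => g (e n) := by
      intro z hz
      obtain ⟨y, ⟨n, rfl⟩, rfl⟩ := (hmemU₀ z).1 ((ZFSet.mem_toSet_s9 _ _).1 hz)
      exact ⟨n, rfl⟩
    exact Set.Countable.mono this (Set.countable_range _)
  -- the final set `U`
  have hUtrans : (zLift U₀).IsTransitive := by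
    intro y hy z hz
    obtain ⟨w, hw, rfl⟩ := mem_zLift.1 hy
    obtain ⟨d, hd, rfl⟩ := mem_zLift.1 hz
    exact mem_zLift.2 ⟨d, hU₀trans.mem_trans hd hw, rfl⟩
  have hUcount : (zLift U₀).toSet.Countable := by
    have : (zLift U₀).toSet ⊆ zLift '' U₀.toSet := by
      intro z hz
      obtain ⟨w, hw, rfl⟩ := mem_zLift.1 ((ZFSet.mem_toSet_s9 _ _).1 hz)
      exact ⟨w, (ZFSet.mem_toSet_s9 _ _).2 hw, rfl⟩
    exact Set.Countable.mono this (hU₀count.image _)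
  letI : setTheoryLang.Structure ↥U₀.toSet := memStructure U₀.toSet
  letI : setTheoryLang.Structure ↥(zLift U₀).toSet := memStructure (zLift U₀).toSet
  -- the isomorphism between `S` and the collapse `U₀`
  have hf₁ : Function.Bijective (fun a : S => (⟨g a.1.1,
      (ZFSet.mem_toSet_s9 _ _).2 ((hmemU₀ _).2 ⟨a.1.1, hinS a, rfl⟩)⟩ : ↥U₀.toSet)) := by
    constructor
    · intro a b h
      exact Subtype.ext (Subtype.ext
        (hinj a.1.1 (hinS a) b.1.1 (hinS b) (congrArg Subtype.val h)))
    · intro u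
      obtain ⟨y, hy, hgy⟩ := (hmemU₀ u.1).1 ((ZFSet.mem_toSet_s9 _ _).1 u.2)
      exact ⟨⟨⟨y, hmemV y hy⟩, hmemS y hy⟩, Subtype.ext hgy⟩
  let E₁ : S ≃[setTheoryLang] ↥U₀.toSet :=
    { toEquiv := Equiv.ofBijective _ hf₁
      map_fun' := fun {n} f _ => Empty.elim f
      map_rel' := by
        intro n r x
        cases r
        show g (x 0).1.1 ∈ g (x 1).1.1 ↔ (x 0).1.1 ∈ (x 1).1.1
        constructor
        · intro h
          obtain ⟨d, hd, hdm, hdg⟩ := mem_collapse0.1 h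
          rwa [hinj d hd (x 0).1.1 (hinS (x 0)) hdg] at hdm
        · intro h
          exact mem_collapse0.2 ⟨(x 0).1.1, hinS (x 0), h, rfl⟩ }
  -- the isomorphism between `U₀` and its lift `U`
  have hf₂ : Function.Bijective (fun y : ↥U₀.toSet => (⟨zLift y.1,
      (ZFSet.mem_toSet_s9 _ _).2 (mem_zLift.2 ⟨y.1, (ZFSet.mem_toSet_s9 _ _).1 y.2, rfl⟩)⟩ :
        ↥(zLift U₀).toSet)) := by
    constructor
    · intro a b h
      exact Subtype.ext (zLift_injective (congrArg Subtype.val h))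
    · intro z
      obtain ⟨w, hw, hwz⟩ := mem_zLift.1 ((ZFSet.mem_toSet_s9 _ _).1 z.2)
      exact ⟨⟨w, (ZFSet.mem_toSet_s9 _ _).2 hw⟩, Subtype.ext hwz⟩
  let E₂ : ↥U₀.toSet ≃[setTheoryLang] ↥(zLift U₀).toSet :=
    { toEquiv := Equiv.ofBijective _ hf₂
      map_fun' := fun {n} f _ => Empty.elim f
      map_rel' := by
        intro n r x
        cases r
        show zLift (x 0).1 ∈ zLift (x 1).1 ↔ (x 0).1 ∈ (x 1).1
        exact zLift_mem_zLift }
  refine ⟨zLift U₀, hUtrans, hUcount,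
    rank_lt_omega1_of_countable hUcount (hereditary_rank_lt hUtrans hUcount), ?_⟩
  intro φ
  have t1 := FirstOrder.Language.StrongHomClass.realize_sentence E₁ φ
  have t2 := FirstOrder.Language.StrongHomClass.realize_sentence E₂ φ
  have t0 := FirstOrder.Language.ElementarySubstructure.realize_sentence S φ
  exact (t2.symm.trans t1.symm).trans t0
end
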